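/- Let p_1, p_2, …, p_n be distinct primes and f_1, …, f_n natural numbers. Then μ(C_{p_1}^{f_1} × C_{p_2}^{f_2} × ⋯ × C_{p_n}^{f_n}) = ∏_{i=1}^{n} (-1)^{f_i} · p_i^{C(f_i,2)}, where C(f,2) denotes the binomial coefficient f choose 2. -/

import Mathlib

open Finset

/-- The Möbius function of the subgroup lattice of a finite group `G`,
evaluated at a pair of subgroups. -/
noncomputable def subgroupMu (G : Type*) [Group G] [Finite G] (H K : Subgroup G) : ℤ :=
  letI : Fintype (Subgroup G) := Fintype.ofFinite _
  letI : DecidableEq (Subgroup G) := Classical.decEq _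
  letI : @DecidableRel (Subgroup G) (Subgroup G) (· < ·) := Classical.decRel _
  letI : @DecidableRel (Subgroup G) (Subgroup G) (· ≤ ·) := Classical.decRel _
  letI := Fintype.toLocallyFiniteOrder (α := Subgroup G)
  IncidenceAlgebra.mu ℤ H K

/-- The Möbius number of a finite group `G`: the value `μ(⊥, ⊤)` of the Möbius
function of its lattice of subgroups. -/
noncomputable def muGrp (G : Type*) [Group G] [Finite G] : ℤ :=
  subgroupMu G ⊥ ⊤

open IncidenceAlgebra

section MuBasic
variable {α β : Type*} [PartialOrder α] [PartialOrder β]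

lemma mu_instances_eq (d1 d2 : DecidableEq α) (l1 l2 : LocallyFiniteOrder α) (a b : α) :
    @IncidenceAlgebra.mu ℤ α _ _ _ l1 d1 a b = @IncidenceAlgebra.mu ℤ α _ _ _ l2 d2 a b := by
  have h1 : d1 = d2 := Subsingleton.elim (α := ∀ a b : α, Decidable (a = b)) d1 d2
  have h2 : l1 = l2 := Subsingleton.elim _ _
  subst h1; subst h2; rfl

variable [LocallyFiniteOrder α] [LocallyFiniteOrder β] [DecidableEq α] [DecidableEq β]

lemma mu_orderEmbedding_aux (e : β ↪o α)
    (hful : ∀ x y : β, ∀ a : α, e x ≤ a → a ≤ e y → ∃ c, e c = a) :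
    ∀ N (x y : β), (Finset.Icc x y).card ≤ N →
      IncidenceAlgebra.mu ℤ (e x) (e y) = IncidenceAlgebra.mu ℤ x y := by
  intro N
  induction N with
  | zero =>
    intro x y h
    have hxy : ¬ x ≤ y := by
      intro hle
      have : x ∈ Finset.Icc x y := Finset.mem_Icc.mpr ⟨le_refl _, hle⟩
      have := Finset.card_pos.mpr ⟨x, this⟩
      omega
    rw [apply_eq_zero_of_not_le hxy, apply_eq_zero_of_not_le (by simpa using hxy)]
  | succ N ih =>
    intro x y h
    by_cases hxy : x = y
    · subst hxy; simp
    by_cases hle : x ≤ y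
    · rw [mu_eq_neg_sum_Ico_of_ne hxy, mu_eq_neg_sum_Ico_of_ne (fun hc => hxy (e.injective hc))]
      congr 1
      have himg : Finset.Ico (e x) (e y) = (Finset.Ico x y).image e := by
        ext a
        simp only [Finset.mem_Ico, Finset.mem_image]
        constructor
        · rintro ⟨h1, h2⟩
          obtain ⟨c, rfl⟩ := hful x y a h1 h2.le
          exact ⟨c, ⟨e.le_iff_le.mp h1, by simpa using h2⟩, rfl⟩
        · rintro ⟨c, ⟨h1, h2⟩, rfl⟩
          exact ⟨e.monotone h1, by simpa using h2⟩
      rw [himg, Finset.sum_image (fun a _ b _ hab => e.injective hab)]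
      refine Finset.sum_congr rfl fun z hz => ?_
      rw [Finset.mem_Ico] at hz
      refine ih x z ?_
      have hsub : Finset.Icc x z ⊆ Finset.Icc x y := Finset.Icc_subset_Icc_right hz.2.le
      have hyy : y ∈ Finset.Icc x y := Finset.mem_Icc.mpr ⟨hle, le_refl _⟩
      have hyn : y ∉ Finset.Icc x z := fun hc => absurd (Finset.mem_Icc.mp hc).2 hz.2.not_ge
      have := Finset.card_lt_card (Finset.ssubset_iff_of_subset hsub |>.mpr ⟨y, hyy, hyn⟩)
      omega
    · rw [apply_eq_zero_of_not_le hle, apply_eq_zero_of_not_le (by simpa using hle)]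

lemma mu_orderEmbedding (e : β ↪o α)
    (hful : ∀ x y : β, ∀ a : α, e x ≤ a → a ≤ e y → ∃ c, e c = a) (x y : β) :
    IncidenceAlgebra.mu ℤ (e x) (e y) = IncidenceAlgebra.mu ℤ x y :=
  mu_orderEmbedding_aux e hful _ x y le_rfl

lemma mu_orderIso (e : β ≃o α) (x y : β) :
    IncidenceAlgebra.mu ℤ (e x) (e y) = IncidenceAlgebra.mu ℤ x y :=
  mu_orderEmbedding e.toOrderEmbedding (fun _ _ a _ _ => ⟨e.symm a, e.apply_symm_apply a⟩) x y

end MuBasic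

section Weisner
variable {γ : Type*} [Lattice γ] [BoundedOrder γ] [Fintype γ] [DecidableEq γ]
  [@DecidableRel γ γ (· ≤ ·)] [LocallyFiniteOrder γ]

lemma weisner (a : γ) (ha : a ≠ ⊥) :
    ∑ x : γ, (if x ⊔ a = ⊤ then IncidenceAlgebra.mu ℤ ⊥ x else 0) = 0 := by
  have key : ∀ x : γ, (if x ⊔ a = ⊤ then (1 : ℤ) else 0)
      = ∑ y : γ, (if x ≤ y ∧ a ≤ y then IncidenceAlgebra.mu ℤ y ⊤ else 0) := by
    intro x
    have h1 : ∑ y ∈ Finset.Icc (x ⊔ a) ⊤, IncidenceAlgebra.mu ℤ y ⊤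
        = if x ⊔ a = ⊤ then (1 : ℤ) else 0 := sum_Icc_mu_left (𝕜 := ℤ) (x ⊔ a) ⊤
    rw [← h1]
    rw [← Finset.sum_filter]
    refine (Finset.sum_congr ?_ fun _ _ => rfl)
    ext y
    simp [Finset.mem_Icc, sup_le_iff, le_top, and_comm]
  have key2 : ∀ y : γ, (∑ x : γ, if x ≤ y then IncidenceAlgebra.mu ℤ ⊥ x else 0)
      = if (⊥ : γ) = y then (1 : ℤ) else 0 := by
    intro y
    rw [← sum_Icc_mu_right (𝕜 := ℤ) ⊥ y, ← Finset.sum_filter]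
    refine (Finset.sum_congr ?_ fun _ _ => rfl)
    ext x
    simp [Finset.mem_Icc]
  calc ∑ x : γ, (if x ⊔ a = ⊤ then IncidenceAlgebra.mu ℤ ⊥ x else 0)
      = ∑ x : γ, (IncidenceAlgebra.mu ℤ ⊥ x * if x ⊔ a = ⊤ then 1 else 0) := by
        simp [mul_ite]
    _ = ∑ x : γ, ∑ y : γ, (if x ≤ y ∧ a ≤ y then IncidenceAlgebra.mu ℤ ⊥ x * IncidenceAlgebra.mu ℤ y ⊤ else 0) := by
        refine Finset.sum_congr rfl fun x _ => ?_
        rw [key x, Finset.mul_sum]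
        refine Finset.sum_congr rfl fun y _ => ?_
        split <;> simp
    _ = ∑ y : γ, ∑ x : γ, (if x ≤ y ∧ a ≤ y then IncidenceAlgebra.mu ℤ ⊥ x * IncidenceAlgebra.mu ℤ y ⊤ else 0) :=
        Finset.sum_comm
    _ = ∑ y : γ, (if a ≤ y then (if (⊥ : γ) = y then (1:ℤ) else 0) * IncidenceAlgebra.mu ℤ y ⊤ else 0) := by
        refine Finset.sum_congr rfl fun y _ => ?_
        by_cases hay : a ≤ y
        · simp only [hay, and_true, if_true, ← key2 y, Finset.sum_mul]
          refine Finset.sum_congr rfl fun x _ => ?_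
          by_cases hxy : x ≤ y <;> simp [hxy]
        · simp [hay]
    _ = 0 := by
        refine Finset.sum_eq_zero fun y _ => ?_
        by_cases hay : a ≤ y
        · by_cases hby : (⊥ : γ) = y
          · subst hby
            simp [le_bot_iff.mp hay] at ha
          · simp [hay, hby]
        · simp [hay]

end Weisner

lemma mu_pi : ∀ {n : ℕ} (L : Fin n → Type) [∀ i, PartialOrder (L i)] [∀ i, Fintype (L i)]
    (dp : DecidableEq (∀ i, L i)) (lp : LocallyFiniteOrder (∀ i, L i))
    (d : ∀ i, DecidableEq (L i)) (l : ∀ i, LocallyFiniteOrder (L i))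
    (a b : ∀ i, L i),
    @IncidenceAlgebra.mu ℤ _ _ _ _ lp dp a b
      = ∏ i, @IncidenceAlgebra.mu ℤ _ _ _ _ (l i) (d i) (a i) (b i) := by
  intro n
  induction n with
  | zero =>
    intro L _ _ dp lp d l a b
    have : a = b := Subsingleton.elim a b
    subst this
    simp
  | succ n ih =>
    intro L _ _ dp lp d l a b
    letI : DecidableEq (∀ i : Fin n, L i.succ) := Classical.decEq _
    letI : @DecidableRel (∀ i : Fin n, L i.succ) (∀ i : Fin n, L i.succ) (· ≤ ·) := Classical.decRel _
    letI : @DecidableRel (∀ i : Fin n, L i.succ) (∀ i : Fin n, L i.succ) (· < ·) := Classical.decRel _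
    letI lt : LocallyFiniteOrder (∀ i : Fin n, L i.succ) := Fintype.toLocallyFiniteOrder
    letI : ∀ i : Fin (n+1), @DecidableRel (L i) (L i) (· ≤ ·) := fun i => Classical.decRel _
    letI l0 : LocallyFiniteOrder (L 0) := l 0
    letI d0 : DecidableEq (L 0) := d 0
    let e' : (L 0 × ∀ i : Fin n, L i.succ) ≃o (∀ i, L i) := Fin.consOrderIso L
    have h1 : @IncidenceAlgebra.mu ℤ _ _ _ _ lp dp a b
        = IncidenceAlgebra.mu ℤ (e'.symm a) (e'.symm b) := by
      rw [← mu_orderIso e' (e'.symm a) (e'.symm b)]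
      simp only [OrderIso.apply_symm_apply]
    rw [h1]
    have h2 : IncidenceAlgebra.mu ℤ (e'.symm a) (e'.symm b)
        = IncidenceAlgebra.mu ℤ (e'.symm a).1 (e'.symm b).1
          * IncidenceAlgebra.mu ℤ (e'.symm a).2 (e'.symm b).2 := by
      rw [← IncidenceAlgebra.mu_prod_mu (𝕜 := ℤ) (α := L 0) (β := ∀ i : Fin n, L i.succ)]
      rfl
    rw [h2]
    have ha1 : (e'.symm a).1 = a 0 := rfl
    have ha2 : (e'.symm a).2 = fun i : Fin n => a i.succ := rfl
    have hb1 : (e'.symm b).1 = b 0 := rfl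
    have hb2 : (e'.symm b).2 = fun i : Fin n => b i.succ := rfl
    rw [ha1, ha2, hb1, hb2, Fin.prod_univ_succ]
    congr 1
    exact ih (fun i => L i.succ) _ lt (fun i => d i.succ) (fun i => l i.succ) _ _


section PiSubgroup
variable {n : ℕ} {p : Fin n → ℕ} {G : Fin n → Type*} [∀ i, CommGroup (G i)]
  [∀ i, Fact (p i).Prime]

lemma mulSingle_mem_of_coprime (hp : Function.Injective p)
    (hexp : ∀ i (g : G i), g ^ (p i) = 1)
    (K : Subgroup (∀ i, G i)) (k : ∀ i, G i) (hk : k ∈ K) (i : Fin n) :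
    Pi.mulSingle i (k i) ∈ K := by
  have hprime : ∀ j, (p j).Prime := fun j => Fact.out
  set P : ℕ := ∏ j ∈ Finset.univ.erase i, p j with hP
  have hcop : P.Coprime (p i) := by
    exact Nat.Coprime.prod_left fun j hj => (Nat.coprime_primes (hprime j) (hprime i)).mpr
      (fun h => (Finset.mem_erase.mp hj).1 (hp h))
  set m : ℕ := P * (ZMod.val ((P : ZMod (p i))⁻¹)) with hm
  have hm1 : (m : ZMod (p i)) = 1 := by
    rw [hm]
    push_cast
    rw [ZMod.natCast_val, ZMod.cast_id]
    exact ZMod.coe_mul_inv_eq_one P hcop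
  have hmod : m % (p i) = 1 := by
    have h2 := (ZMod.natCast_eq_natCast_iff m 1 (p i)).mp (by rw [hm1]; norm_num)
    have := (hprime i).one_lt
    unfold Nat.ModEq at h2
    have h3 : 1 % p i = 1 := Nat.mod_eq_of_lt this
    omega
  have hdvd : ∀ j, j ≠ i → p j ∣ m := fun j hj =>
    dvd_mul_of_dvd_left (Finset.dvd_prod_of_mem _ (Finset.mem_erase.mpr ⟨hj, Finset.mem_univ j⟩)) _
  have key : k ^ m = Pi.mulSingle i (k i) := by
    funext j
    rw [Pi.pow_apply]
    by_cases hj : j = i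
    · subst hj
      rw [Pi.mulSingle_eq_same]
      conv_lhs => rw [← Nat.div_add_mod m (p j), pow_add, pow_mul, hexp, one_pow, hmod, pow_one]
      rw [one_mul]
    · obtain ⟨t, ht⟩ := hdvd j hj
      rw [ht, pow_mul, hexp, one_pow, Pi.mulSingle_eq_of_ne hj]
  rw [← key]
  exact pow_mem hk m

lemma pi_map_eval (hp : Function.Injective p) (hexp : ∀ i (g : G i), g ^ (p i) = 1)
    (K : Subgroup (∀ i, G i)) :
    Subgroup.pi Set.univ (fun i => K.map (Pi.evalMonoidHom G i)) = K := by
  refine le_antisymm ?_ ?_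
  · intro x hx
    rw [Subgroup.mem_pi] at hx
    have hx' : ∀ i, ∃ g ∈ K, g i = x i := by
      intro i
      simpa [Subgroup.mem_map] using hx i trivial
    choose g hg hgi using hx'
    have hxe : x = ∏ i, Pi.mulSingle i (x i) := (Finset.univ_prod_mulSingle x).symm
    rw [hxe]
    refine Subgroup.prod_mem K fun i _ => ?_
    rw [← hgi i]
    exact mulSingle_mem_of_coprime hp hexp K (g i) (hg i) i
  · intro x hx
    rw [Subgroup.mem_pi]
    exact fun i _ => ⟨x, hx, rfl⟩

lemma eval_map_pi (S : ∀ i, Subgroup (G i)) (i : Fin n) :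
    (Subgroup.pi Set.univ S).map (Pi.evalMonoidHom G i) = S i := by
  ext s
  simp only [Subgroup.mem_map, Subgroup.mem_pi, Set.mem_univ, forall_true_left]
  constructor
  · rintro ⟨g, hg, rfl⟩
    exact hg i
  · intro hs
    refine ⟨Pi.mulSingle i s, fun j => ?_, Pi.mulSingle_eq_same i s⟩
    by_cases hj : j = i
    · subst hj; simpa using hs
    · rw [Pi.mulSingle_eq_of_ne hj]; exact one_mem _

/-- Lattice iso for subgroups of coprime product. -/
noncomputable def subgroupPiOrderIso (hp : Function.Injective p)
    (hexp : ∀ i (g : G i), g ^ (p i) = 1) :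
    Subgroup (∀ i, G i) ≃o (∀ i, Subgroup (G i)) where
  toFun K i := K.map (Pi.evalMonoidHom G i)
  invFun S := Subgroup.pi Set.univ S
  left_inv K := pi_map_eval hp hexp K
  right_inv S := funext (eval_map_pi S)
  map_rel_iff' := by
    intro K K'
    constructor
    · intro h
      calc K = Subgroup.pi Set.univ (fun i => K.map (Pi.evalMonoidHom G i)) :=
            (pi_map_eval hp hexp K).symm
        _ ≤ Subgroup.pi Set.univ (fun i => K'.map (Pi.evalMonoidHom G i)) := by
            intro x hx
            rw [Subgroup.mem_pi] at hx ⊢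
            exact fun i hi => h i (hx i hi)
        _ = K' := pi_map_eval hp hexp K'
    · intro h i
      exact Subgroup.map_mono h

end PiSubgroup

/-- The Möbius number `μ(⊥,⊤)` of a finite bounded partial order. -/
noncomputable def muL (α : Type*) [PartialOrder α] [BoundedOrder α] [Finite α] : ℤ :=
  letI : Fintype α := Fintype.ofFinite _
  letI : DecidableEq α := Classical.decEq _
  letI : @DecidableRel α α (· ≤ ·) := Classical.decRel _
  letI : @DecidableRel α α (· < ·) := Classical.decRel _
  letI : LocallyFiniteOrder α := Fintype.toLocallyFiniteOrder
  IncidenceAlgebra.mu (α := α) ℤ ⊥ ⊤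

lemma muL_eq_mu {α : Type*} [PartialOrder α] [BoundedOrder α] [Finite α]
    (d : DecidableEq α) (l : LocallyFiniteOrder α) :
    muL α = @IncidenceAlgebra.mu ℤ α _ _ _ l d ⊥ ⊤ := by
  unfold muL
  exact mu_instances_eq _ _ _ _ _ _

lemma muL_congr {α β : Type*} [PartialOrder α] [BoundedOrder α] [Finite α]
    [PartialOrder β] [BoundedOrder β] [Finite β] (e : α ≃o β) :
    muL α = muL β := by
  letI : DecidableEq α := Classical.decEq _
  letI : DecidableEq β := Classical.decEq _
  letI : @DecidableRel α α (· ≤ ·) := Classical.decRel _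
  letI : @DecidableRel α α (· < ·) := Classical.decRel _
  letI : @DecidableRel β β (· ≤ ·) := Classical.decRel _
  letI : @DecidableRel β β (· < ·) := Classical.decRel _
  letI : Fintype α := Fintype.ofFinite _
  letI : Fintype β := Fintype.ofFinite _
  letI : LocallyFiniteOrder α := Fintype.toLocallyFiniteOrder
  letI : LocallyFiniteOrder β := Fintype.toLocallyFiniteOrder
  rw [muL_eq_mu (α := α) (Classical.decEq _) Fintype.toLocallyFiniteOrder,
    muL_eq_mu (α := β) (Classical.decEq _) Fintype.toLocallyFiniteOrder]
  rw [← mu_orderIso e ⊥ ⊤, e.map_bot, e.map_top]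

section Interval
variable {R M : Type*} [Ring R] [AddCommGroup M] [Module R M] [Finite M]

instance submodule_finite : Finite (Submodule R M) :=
  Finite.of_injective (fun S => (S : Set M)) SetLike.coe_injective

lemma mu_bot_submodule [DecidableEq (Submodule R M)] [LocallyFiniteOrder (Submodule R M)]
    (W : Submodule R M) :
    IncidenceAlgebra.mu (α := Submodule R M) ℤ ⊥ W = muL (Submodule R W) := by
  letI : DecidableEq (Submodule R W) := Classical.decEq _
  letI : @DecidableRel (Submodule R W) (Submodule R W) (· ≤ ·) := Classical.decRel _
  letI : @DecidableRel (Submodule R W) (Submodule R W) (· < ·) := Classical.decRel _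
  letI : Fintype (Submodule R W) := Fintype.ofFinite _
  letI : LocallyFiniteOrder (Submodule R W) := Fintype.toLocallyFiniteOrder
  rw [muL_eq_mu (α := Submodule R W) (Classical.decEq _) Fintype.toLocallyFiniteOrder]
  set emb := Submodule.MapSubtype.orderEmbedding W with hemb
  have hval : ∀ u : Submodule R W, emb u = Submodule.map W.subtype u := fun u => rfl
  have hful : ∀ x y : Submodule R W, ∀ a : Submodule R M,
      emb x ≤ a → a ≤ emb y → ∃ c, emb c = a := by
    intro x y a h1 h2
    have haW : a ≤ W := le_trans h2 (by rw [hval]; exact Submodule.map_subtype_le W y)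
    refine ⟨(Submodule.MapSubtype.orderIso W).symm ⟨a, haW⟩, ?_⟩
    have h3 := (Submodule.MapSubtype.orderIso W).apply_symm_apply ⟨a, haW⟩
    rw [hval]
    exact congrArg Subtype.val h3
  have h := mu_orderEmbedding emb hful ⊥ ⊤
  have hbot : emb ⊥ = ⊥ := by rw [hval, Submodule.map_bot]
  have htop : emb ⊤ = W := by
    rw [hval, Submodule.map_top, Submodule.range_subtype]
  rw [hbot, htop] at h
  exact h
end Interval

noncomputable def finSnocLinearEquiv (R : Type*) [Semiring R] (m : ℕ) :
    (Fin (m+1) → R) ≃ₗ[R] (Fin m → R) × R where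
  toFun x := (Fin.init x, x (Fin.last m))
  invFun uc := Fin.snoc uc.1 uc.2
  map_add' x y := by refine Prod.ext ?_ rfl; funext i; rfl
  map_smul' c x := by refine Prod.ext ?_ rfl; funext i; rfl
  left_inv x := Fin.snoc_init_self x
  right_inv uc := by
    refine Prod.ext ?_ ?_
    · funext i; simp [Fin.init_snoc]
    · simp

section PrimePart
variable (p : ℕ) [hp : Fact p.Prime]

lemma muSub_succ (m : ℕ) :
    muL (Submodule (ZMod p) (Fin (m+1) → ZMod p))
      = -((p : ℤ)^m) * muL (Submodule (ZMod p) (Fin m → ZMod p)) := by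
  classical
  rw [muL_congr (Submodule.orderIsoMapComap (finSnocLinearEquiv (ZMod p) m))]
  set K := ZMod p with hK
  set U := (Fin m → ZMod p) with hU
  set L := Submodule K ((Fin m → ZMod p) × ZMod p) with hL
  letI : Fintype L := Fintype.ofFinite _
  letI : DecidableEq L := Classical.decEq _
  letI : @DecidableRel L L (· ≤ ·) := Classical.decRel _
  letI : @DecidableRel L L (· < ·) := Classical.decRel _
  letI lfo : LocallyFiniteOrder L := Fintype.toLocallyFiniteOrder
  set a : L := Submodule.prod ⊥ ⊤ with ha_def
  have hmem_a : ∀ z : U × K, z ∈ a ↔ z.1 = 0 := by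
    intro z; rw [ha_def, Submodule.mem_prod]; simp
  have ha : a ≠ ⊥ := by
    intro hcon
    have h1 : ((0 : U), (1 : K)) ∈ a := (hmem_a _).mpr rfl
    rw [hcon, Submodule.mem_bot] at h1
    exact one_ne_zero (congrArg Prod.snd h1)
  have hw := weisner (γ := L) a ha
  set Γ : (U →ₗ[K] K) → L := fun φ => LinearMap.graph φ with hΓ_def
  have hΓmem : ∀ (φ : U →ₗ[K] K) (z : U × K), z ∈ Γ φ ↔ z.2 = φ z.1 := by
    intro φ z; exact LinearMap.mem_graph_iff φ z
  have hΓinj : Function.Injective Γ := by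
    intro φ ψ h
    refine LinearMap.ext fun u => ?_
    have h1 : ((u, φ u) : U × K) ∈ Γ ψ := h ▸ ((hΓmem φ (u, φ u)).mpr rfl)
    exact (hΓmem ψ (u, φ u)).mp h1
  have hΓsup : ∀ φ, Γ φ ⊔ a = ⊤ := by
    intro φ
    rw [eq_top_iff]
    intro z _
    have hz : z = ((z.1, φ z.1) : U × K) + (0, z.2 - φ z.1) := by
      refine Prod.ext ?_ ?_ <;> simp
    rw [hz]
    exact Submodule.add_mem_sup ((hΓmem φ _).mpr rfl) ((hmem_a _).mpr rfl)
  have hΓne : ∀ φ, Γ φ ≠ ⊤ := by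
    intro φ hcon
    have h1 : ((0 : U), (1 : K)) ∈ Γ φ := by rw [hcon]; trivial
    have h2 := (hΓmem φ _).mp h1
    simp only [map_zero] at h2
    exact one_ne_zero h2
  have hclass : ∀ x : L, x ⊔ a = ⊤ → x ≠ ⊤ → ∃ φ, x = Γ φ := by
    intro x hsup hne
    have hdisj : ∀ w : U × K, w ∈ x → w.1 = 0 → w = 0 := by
      intro w hw hw1
      by_contra hwne
      have hw2 : w.2 ≠ 0 := by
        intro h2; exact hwne (Prod.ext hw1 h2)
      have hax : a ≤ x := by
        intro z hz
        have hz1 : z.1 = 0 := (hmem_a z).mp hz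
        have : z = (z.2 * w.2⁻¹) • w := by
          refine Prod.ext ?_ ?_
          · simp [hw1, hz1]
          · simp [Prod.smul_snd, smul_eq_mul, mul_assoc, inv_mul_cancel₀ hw2]
        rw [this]
        exact Submodule.smul_mem x _ hw
      exact hne (by rw [← hsup, sup_eq_left.mpr hax])
    set g : x →ₗ[K] U := (LinearMap.fst K U K).comp x.subtype with hg_def
    have hginj : Function.Injective g := by
      intro w w' hww
      have h1 : ((w : U × K) - (w' : U × K)).1 = 0 := by
        have : (w : U × K).1 = (w' : U × K).1 := hww
        simp [this]
      have h2 := hdisj _ (Submodule.sub_mem x w.2 w'.2) h1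
      exact Subtype.ext (sub_eq_zero.mp h2)
    have hgsurj : Function.Surjective g := by
      intro u
      have h1 : ((u, 0) : U × K) ∈ x ⊔ a := by rw [hsup]; trivial
      obtain ⟨w, hw, b, hb, hwb⟩ := Submodule.mem_sup.mp h1
      have hb1 : b.1 = 0 := (hmem_a b).mp hb
      refine ⟨⟨w, hw⟩, ?_⟩
      have : w.1 + b.1 = u := congrArg Prod.fst hwb
      have h' : w.1 = u := by simpa [hb1] using this
      exact h'
    set e := LinearEquiv.ofBijective g ⟨hginj, hgsurj⟩ with he_def
    set φ : U →ₗ[K] K := (LinearMap.snd K U K).comp (x.subtype.comp (e.symm : U →ₗ[K] x)) with hφ_def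
    have hφval : ∀ u : U, φ u = ((e.symm u : x) : U × K).2 := fun u => rfl
    have hesymm : ∀ w : x, e.symm ((w : U × K).1) = w := by
      intro w
      have : e w = (w : U × K).1 := rfl
      rw [← this, LinearEquiv.symm_apply_apply]
    refine ⟨φ, ?_⟩
    ext z
    rw [hΓmem]
    constructor
    · intro hz
      rw [hφval, hesymm ⟨z, hz⟩]
    · intro hz
      have h1 : ((e.symm z.1 : x) : U × K) ∈ x := (e.symm z.1 : x).2
      have h2 : ((e.symm z.1 : x) : U × K).1 = z.1 := by
        have : g (e.symm z.1) = z.1 := e.apply_symm_apply z.1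
        exact this
      have h3 : ((e.symm z.1 : x) : U × K) = z := by
        refine Prod.ext h2 ?_
        rw [hz, hφval]
      rw [← h3]
      exact h1
  have hmu : ∀ φ : U →ₗ[K] K, IncidenceAlgebra.mu ℤ (⊥ : L) (Γ φ) = muL (Submodule K U) := by
    intro φ
    rw [mu_bot_submodule (Γ φ)]
    set g : (Γ φ) →ₗ[K] U := (LinearMap.fst K U K).comp (Γ φ).subtype with hg_def
    have hbij : Function.Bijective g := by
      constructor
      · intro w w' hww
        have h2 : (w : U × K).2 = (w' : U × K).2 := by
          rw [(hΓmem φ _).mp w.2, (hΓmem φ _).mp w'.2]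
          exact congrArg φ hww
        exact Subtype.ext (Prod.ext hww h2)
      · intro u
        exact ⟨⟨(u, φ u), (hΓmem φ _).mpr rfl⟩, rfl⟩
    exact muL_congr (Submodule.orderIsoMapComap (LinearEquiv.ofBijective g hbij))
  -- now sum manipulation
  have hsplit : ∑ x : L, (if x ⊔ a = ⊤ then IncidenceAlgebra.mu ℤ (⊥ : L) x else 0)
      = IncidenceAlgebra.mu ℤ (⊥ : L) ⊤
        + ∑ x ∈ Finset.univ.erase ⊤, (if x ⊔ a = ⊤ then IncidenceAlgebra.mu ℤ (⊥ : L) x else 0) := by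
    rw [← Finset.sum_erase_add Finset.univ _ (Finset.mem_univ ⊤)]
    rw [if_pos (by simp)]
    ring
  letI : Finite (U →ₗ[K] K) :=
    Finite.of_injective (fun φ : U →ₗ[K] K => (φ : U → K)) DFunLike.coe_injective
  letI : Fintype (U →ₗ[K] K) := Fintype.ofFinite _
  have himg : (Finset.univ.erase (⊤ : L)).filter (fun x => x ⊔ a = ⊤)
      = Finset.univ.image Γ := by
    ext x
    simp only [Finset.mem_filter, Finset.mem_erase, Finset.mem_univ, Finset.mem_image, true_and,
      and_true]
    constructor
    · rintro ⟨hne, hsup⟩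
      obtain ⟨φ, rfl⟩ := hclass x hsup hne
      exact ⟨φ, rfl⟩
    · rintro ⟨φ, rfl⟩
      exact ⟨hΓne φ, hΓsup φ⟩
  have hsum2 : ∑ x ∈ Finset.univ.erase (⊤ : L), (if x ⊔ a = ⊤ then IncidenceAlgebra.mu ℤ (⊥ : L) x else 0)
      = (p : ℤ)^m * muL (Submodule K U) := by
    rw [← Finset.sum_filter, himg, Finset.sum_image (fun a _ b _ h => hΓinj h)]
    have hcard : Fintype.card (U →ₗ[K] K) = p ^ m := by
      have h1 := Fintype.card_congr (((Pi.basisFun K (Fin m)).constr K (M' := K)).toEquiv)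
      rw [← h1]
      have h2 : Fintype.card (Fin m → K) = Fintype.card K ^ m := by
        rw [Fintype.card_fun]; simp
      rw [h2, ZMod.card p]
    calc ∑ φ : U →ₗ[K] K, IncidenceAlgebra.mu ℤ (⊥ : L) (Γ φ)
        = ∑ _φ : U →ₗ[K] K, muL (Submodule K U) := Finset.sum_congr rfl fun φ _ => hmu φ
      _ = (Fintype.card (U →ₗ[K] K) : ℤ) * muL (Submodule K U) := by
          rw [Finset.sum_const, Finset.card_univ, nsmul_eq_mul]
      _ = (p : ℤ)^m * muL (Submodule K U) := by rw [hcard]; push_cast; ring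
  have hfinal : IncidenceAlgebra.mu ℤ (⊥ : L) ⊤ = -((p : ℤ)^m) * muL (Submodule K U) := by
    rw [hsplit, hsum2] at hw
    linarith
  rw [muL_eq_mu (α := L) (Classical.decEq _) lfo]
  exact hfinal

end PrimePart

lemma muL_of_subsingleton (α : Type*) [PartialOrder α] [BoundedOrder α] [Finite α]
    [Subsingleton α] : muL α = 1 := by
  letI : Fintype α := Fintype.ofFinite _
  letI d : DecidableEq α := Classical.decEq _
  letI : @DecidableRel α α (· ≤ ·) := Classical.decRel _
  letI : @DecidableRel α α (· < ·) := Classical.decRel _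
  letI l : LocallyFiniteOrder α := Fintype.toLocallyFiniteOrder
  rw [muL_eq_mu d l]
  have h : (⊤ : α) = ⊥ := Subsingleton.elim _ _
  rw [h]
  exact IncidenceAlgebra.mu_self _

lemma muSub_zero (p : ℕ) [Fact p.Prime] : muL (Submodule (ZMod p) (Fin 0 → ZMod p)) = 1 :=
  muL_of_subsingleton _

lemma muSub_formula (p : ℕ) [Fact p.Prime] (f : ℕ) :
    muL (Submodule (ZMod p) (Fin f → ZMod p)) = (-1)^f * (p : ℤ)^(f.choose 2) := by
  induction f with
  | zero => simpa using muSub_zero p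
  | succ m ih =>
    rw [muSub_succ p m, ih]
    have hch : (m+1).choose 2 = m + m.choose 2 := by
      rw [Nat.choose_succ_succ]
      simp [Nat.choose_one_right]
    rw [hch, pow_add, pow_succ]
    ring

lemma muSubgroup_elem_ab (q : ℕ) [Fact q.Prime] (f : ℕ) :
    muL (Subgroup (Fin f → Multiplicative (ZMod q))) = (-1)^f * (q : ℤ)^(f.choose 2) := by
  have e1 : Subgroup (Fin f → Multiplicative (ZMod q))
      ≃o Subgroup (Multiplicative (Fin f → ZMod q)) :=
    (MulEquiv.piMultiplicative (fun _ : Fin f => ZMod q)).symm.mapSubgroup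
  have e2 : Subgroup (Multiplicative (Fin f → ZMod q)) ≃o AddSubgroup (Fin f → ZMod q) :=
    (AddSubgroup.toSubgroup (A := Fin f → ZMod q)).symm
  have e3 : AddSubgroup (Fin f → ZMod q) ≃o Submodule (ZMod q) (Fin f → ZMod q) :=
    AddSubgroup.toZModSubmodule q
  rw [muL_congr (e1.trans (e2.trans e3)), muSub_formula]


/-- The Möbius number of a product of elementary abelian groups for distinct
primes is the product of their Möbius numbers. -/
theorem muGrp_prod_elementary_abelian
    {n : ℕ} (p f : Fin n → ℕ) [∀ i, Fact (p i).Prime]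
    (hp' : Function.Injective p) :
    muGrp (∀ i : Fin n, Fin (f i) → Multiplicative (ZMod (p i))) =
      ∏ i, (-1) ^ (f i) * (p i : ℤ) ^ ((f i).choose 2) := by
  have hexp : ∀ (i : Fin n) (g : Fin (f i) → Multiplicative (ZMod (p i))), g ^ (p i) = 1 := by
    intro i g
    funext j
    rw [Pi.pow_apply, Pi.one_apply]
    apply Multiplicative.toAdd.injective
    rw [toAdd_pow, toAdd_one, nsmul_eq_mul]
    simp [ZMod.natCast_self]
  letI dL : ∀ i, DecidableEq (Subgroup (Fin (f i) → Multiplicative (ZMod (p i)))) :=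
    fun _ => Classical.decEq _
  letI : ∀ i, Fintype (Subgroup (Fin (f i) → Multiplicative (ZMod (p i)))) :=
    fun _ => Fintype.ofFinite _
  letI : ∀ i, @DecidableRel (Subgroup (Fin (f i) → Multiplicative (ZMod (p i)))) (Subgroup (Fin (f i) → Multiplicative (ZMod (p i)))) (· ≤ ·) :=
    fun _ => Classical.decRel _
  letI : ∀ i, @DecidableRel (Subgroup (Fin (f i) → Multiplicative (ZMod (p i)))) (Subgroup (Fin (f i) → Multiplicative (ZMod (p i)))) (· < ·) :=
    fun _ => Classical.decRel _
  letI lL : ∀ i, LocallyFiniteOrder (Subgroup (Fin (f i) → Multiplicative (ZMod (p i)))) :=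
    fun _ => Fintype.toLocallyFiniteOrder
  letI dp : DecidableEq (∀ i, Subgroup (Fin (f i) → Multiplicative (ZMod (p i)))) :=
    Classical.decEq _
  letI : @DecidableRel (∀ i, Subgroup (Fin (f i) → Multiplicative (ZMod (p i)))) (∀ i, Subgroup (Fin (f i) → Multiplicative (ZMod (p i)))) (· ≤ ·) :=
    Classical.decRel _
  letI : @DecidableRel (∀ i, Subgroup (Fin (f i) → Multiplicative (ZMod (p i)))) (∀ i, Subgroup (Fin (f i) → Multiplicative (ZMod (p i)))) (· < ·) :=
    Classical.decRel _
  letI lp : LocallyFiniteOrder (∀ i, Subgroup (Fin (f i) → Multiplicative (ZMod (p i)))) :=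
    Fintype.toLocallyFiniteOrder
  calc muGrp (∀ i : Fin n, Fin (f i) → Multiplicative (ZMod (p i)))
      = muL (Subgroup (∀ i : Fin n, Fin (f i) → Multiplicative (ZMod (p i)))) := by
        unfold muGrp subgroupMu muL
        exact mu_instances_eq _ _ _ _ _ _
    _ = muL (∀ i, Subgroup (Fin (f i) → Multiplicative (ZMod (p i)))) :=
        muL_congr (subgroupPiOrderIso hp' hexp)
    _ = ∏ i, (-1) ^ (f i) * (p i : ℤ) ^ ((f i).choose 2) := by
        rw [muL_eq_mu dp lp]
        rw [mu_pi (fun i => Subgroup (Fin (f i) → Multiplicative (ZMod (p i)))) dp lp dL lL ⊥ ⊤]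
        refine Finset.prod_congr rfl fun i _ => ?_
        rw [← muSubgroup_elem_ab (p i) (f i)]
        exact (muL_eq_mu (dL i) (lL i)).symm
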